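/- arXiv:math/0409349 — 3 statements merged into one kernel-verified Lean document; each statement's English description precedes it below -/
import Mathlib

section
/- Let X and Y be compact subsets of the plane ℝ² such that ℝ² \ X and ℝ² \ Y are both connected (neither X nor Y separates the plane). Then for every connected component C of X ∩ Y, the complement ℝ² \ C is connected; equivalently, C equals its topological hull. -/
open Set Metric Bornology

abbrev E2 := EuclideanSpace ℝ (Fin 2)

lemma one_lt_rank_E2 : 1 < Module.rank ℝ E2 := by
  rw [← Module.finrank_eq_rank, finrank_euclideanSpace_fin]
  exact_mod_cast one_lt_two

lemma isPathConnected_compl_closedBall_E2 {R : ℝ} (hR : 0 ≤ R) :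
    IsPathConnected (closedBall (0:E2) R)ᶜ := by
  have hmem : ∀ c : E2, c ∈ (closedBall (0:E2) R)ᶜ ↔ R < ‖c‖ := by
    intro c; simp [mem_closedBall, dist_zero_right, not_le]
  -- joining a point to its radial pushout
  have key : ∀ c : E2, R < ‖c‖ → ∀ M : ℝ, ‖c‖ ≤ M →
      JoinedIn (closedBall (0:E2) R)ᶜ c ((M / ‖c‖) • c) := by
    intro c hc M hM
    have hc0 : 0 < ‖c‖ := lt_of_le_of_lt hR hc
    have h1 : (1:ℝ) ≤ M / ‖c‖ := (one_le_div hc0).mpr hM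
    apply JoinedIn.of_segment_subset
    intro p hp
    obtain ⟨u, v, hu, hv, huv, rfl⟩ := hp
    rw [hmem]
    have : u • c + v • ((M / ‖c‖) • c) = (u + v * (M / ‖c‖)) • c := by
      rw [smul_smul, ← add_smul]
    rw [this, norm_smul]
    have hcoef : (1:ℝ) ≤ u + v * (M / ‖c‖) := by nlinarith
    calc R < ‖c‖ := hc
      _ = 1 * ‖c‖ := (one_mul _).symm
      _ ≤ |u + v * (M / ‖c‖)| * ‖c‖ := by
          apply mul_le_mul_of_nonneg_right _ (norm_nonneg c)
          exact le_trans hcoef (le_abs_self _)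
  rw [isPathConnected_iff]
  constructor
  · refine ⟨EuclideanSpace.single 0 (R+1), ?_⟩
    rw [hmem, EuclideanSpace.norm_single, Real.norm_eq_abs, abs_of_nonneg (by linarith)]; linarith
  · intro a ha b hb
    rw [hmem] at ha hb
    have ha0 : 0 < ‖a‖ := lt_of_le_of_lt hR ha
    have hb0 : 0 < ‖b‖ := lt_of_le_of_lt hR hb
    set M := max ‖a‖ ‖b‖ with hM
    have hMa : ‖a‖ ≤ M := le_max_left _ _
    have hMb : ‖b‖ ≤ M := le_max_right _ _
    have hRM : R < M := lt_of_lt_of_le ha hMa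
    have hnorm : ∀ c : E2, 0 < ‖c‖ → ‖(M / ‖c‖) • c‖ = M := by
      intro c hc0
      rw [norm_smul, Real.norm_eq_abs, abs_of_nonneg (by positivity), div_mul_cancel₀ _ hc0.ne']
    have hsub : sphere (0:E2) M ⊆ (closedBall (0:E2) R)ᶜ := by
      intro y hy
      rw [hmem]
      rw [mem_sphere, dist_zero_right] at hy
      rw [hy]; exact hRM
    have hjs : JoinedIn (closedBall (0:E2) R)ᶜ ((M / ‖a‖) • a) ((M / ‖b‖) • b) := by
      apply JoinedIn.mono _ hsub
      apply (isPathConnected_sphere one_lt_rank_E2 0 (le_of_lt (lt_of_le_of_lt hR hRM))).joinedIn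
      · rw [mem_sphere, dist_zero_right]; exact hnorm a ha0
      · rw [mem_sphere, dist_zero_right]; exact hnorm b hb0
    exact ((key a ha M hMa).trans hjs).trans (key b hb M hMb).symm


-- a nonempty bounded open set cannot have empty frontier; and far points exist
lemma exists_far_point (s : Set E2) (hs : IsBounded s) : ∃ r : E2, r ∉ s := by
  obtain ⟨r0, hr0⟩ := hs.subset_closedBall 0
  refine ⟨EuclideanSpace.single 0 (max r0 0 + 1), fun h => ?_⟩
  have := hr0 h
  rw [mem_closedBall, dist_zero_right, EuclideanSpace.norm_single, Real.norm_eq_abs,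
    abs_of_nonneg (by positivity)] at this
  have := le_max_left r0 0
  linarith [le_max_right r0 (0:ℝ)]

lemma bounded_piece_absurd {X Y : Set E2} (hX : IsCompact X) (hY : IsCompact Y)
    (hXc : IsConnected Xᶜ) (hYc : IsConnected Yᶜ) {x : E2} (hx : x ∈ X ∩ Y)
    {U : Set E2} (hUo : IsOpen U) (hUne : U.Nonempty) (hUconn : IsPreconnected U)
    (hUb : IsBounded U)
    (hUC : Disjoint U (connectedComponentIn (X ∩ Y) x))
    (hfr : frontier U ⊆ connectedComponentIn (X ∩ Y) x) : False := by
  set C := connectedComponentIn (X ∩ Y) x with hCdef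
  have hCsub : C ⊆ X ∩ Y := connectedComponentIn_subset _ _
  -- U is contained in any compact nonseparating set containing the frontier
  have main : ∀ Z : Set E2, IsCompact Z → IsConnected Zᶜ → frontier U ⊆ Z → U ⊆ Z := by
    intro Z hZ hZc hfrZ
    by_contra hcon
    obtain ⟨q, hqU, hqZ⟩ : ∃ q, q ∈ U ∧ q ∉ Z := by
      rw [not_subset] at hcon; exact hcon
    obtain ⟨r, hr⟩ := exists_far_point (Z ∪ closure U) (hZ.isBounded.union hUb.closure)
    have hrZ : r ∉ Z := fun h => hr (Or.inl h)
    have hrU : r ∉ closure U := fun h => hr (Or.inr h)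
    have hcov : Zᶜ ⊆ U ∪ (closure U)ᶜ := by
      intro y hy
      by_cases hyU : y ∈ U
      · exact Or.inl hyU
      · right
        intro hyc
        exact hy (hfrZ ⟨hyc, fun h => hyU (hUo.interior_eq ▸ h)⟩)
    have hd : Disjoint U (closure U)ᶜ := disjoint_compl_right.mono_left subset_closure
    rcases hZc.isPreconnected.subset_or_subset hUo isClosed_closure.isOpen_compl hd hcov with h | h
    · exact hrU (subset_closure (h hrZ))
    · exact (h hqZ) (subset_closure hqU)
  have hUX : U ⊆ X := main X hX hXc (fun y hy => (hCsub (hfr hy)).1)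
  have hUY : U ⊆ Y := main Y hY hYc (fun y hy => (hCsub (hfr hy)).2)
  have hclU : closure U ⊆ X ∩ Y :=
    closure_minimal (subset_inter hUX hUY) (hX.isClosed.inter hY.isClosed)
  -- frontier of U is nonempty
  have hfrne : (frontier U).Nonempty := by
    by_contra h
    rw [not_nonempty_iff_eq_empty] at h
    have hclopen : IsClopen U := by
      refine ⟨isClosed_of_closure_subset fun y hy => ?_, hUo⟩
      by_contra hyU
      have : y ∈ frontier U := ⟨hy, fun hi => hyU (hUo.interior_eq ▸ hi)⟩
      rw [h] at this
      exact this
    have := hclopen.eq_univ hUne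
    obtain ⟨r, hr⟩ := exists_far_point U hUb
    exact hr (this ▸ mem_univ r)
  obtain ⟨z, hz⟩ := hfrne
  have hD : IsPreconnected (C ∪ closure U) := by
    apply IsPreconnected.union' ⟨z, hfr hz, hz.1⟩
      (isConnected_connectedComponentIn_iff.mpr hx).isPreconnected hUconn.closure
  have hDC : C ∪ closure U ⊆ C := by
    apply hD.subset_connectedComponentIn (Or.inl (mem_connectedComponentIn hx))
    exact union_subset hCsub hclU
  obtain ⟨w, hw⟩ := hUne
  exact (disjoint_left.mp hUC hw) (hDC (Or.inr (subset_closure hw)))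

lemma side_absurd {X Y : Set E2} (hX : IsCompact X) (hY : IsCompact Y)
    (hXc : IsConnected Xᶜ) (hYc : IsConnected Yᶜ) {x : E2} (hx : x ∈ X ∩ Y)
    (hCc : IsClosed (connectedComponentIn (X ∩ Y) x))
    {u v : Set E2} (hu : IsOpen u) (hv : IsOpen v) (hdisj : Disjoint u v)
    (hcov : (connectedComponentIn (X ∩ Y) x)ᶜ ⊆ u ∪ v)
    (hub : IsBounded u)
    (hne : ((connectedComponentIn (X ∩ Y) x)ᶜ ∩ u).Nonempty) : False := by
  set C := connectedComponentIn (X ∩ Y) x with hCdef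
  obtain ⟨a, haC, hau⟩ := hne
  have hCo : IsOpen Cᶜ := hCc.isOpen_compl
  set U := connectedComponentIn Cᶜ a with hUdef
  have hUo : IsOpen U := hCo.connectedComponentIn
  have haU : a ∈ U := mem_connectedComponentIn haC
  have hUsub : U ⊆ Cᶜ := connectedComponentIn_subset _ _
  have hUconn : IsPreconnected U := isPreconnected_connectedComponentIn
  have hUu : U ⊆ u :=
    hUconn.subset_left_of_subset_union hu hv hdisj (hUsub.trans hcov) ⟨a, haU, hau⟩
  have hfr : frontier U ⊆ C := by
    intro y hy
    have hyU : y ∉ U := fun h => hy.2 (by rw [hUo.interior_eq]; exact h)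
    by_contra hyC
    have hyV : y ∈ connectedComponentIn Cᶜ y := mem_connectedComponentIn hyC
    obtain ⟨z, hzV, hzU⟩ :=
      mem_closure_iff.mp hy.1 _ hCo.connectedComponentIn hyV
    have h1 : connectedComponentIn Cᶜ y = connectedComponentIn Cᶜ z :=
      connectedComponentIn_eq hzV
    have h2 : U = connectedComponentIn Cᶜ z := connectedComponentIn_eq hzU
    exact hyU (h2 ▸ h1 ▸ hyV)
  exact bounded_piece_absurd hX hY hXc hYc hx hUo ⟨a, haU⟩ hUconn (hub.subset hUu)
    (disjoint_left.mpr fun y hyU hyC => hUsub hyU hyC) hfr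

/-- If `X` and `Y` are compact subsets of the plane neither of which separates the plane,
then no connected component of `X ∩ Y` separates the plane: the complement of each
component of `X ∩ Y` is connected (equivalently, each component equals its topological
hull). -/
theorem complement_of_component_connected
    (X Y : Set (EuclideanSpace ℝ (Fin 2)))
    (hX : IsCompact X) (hY : IsCompact Y)
    (hXc : IsConnected Xᶜ) (hYc : IsConnected Yᶜ) :
    ∀ x ∈ X ∩ Y, IsConnected (connectedComponentIn (X ∩ Y) x)ᶜ := by
  intro x hx
  set C := connectedComponentIn (X ∩ Y) x with hCdef
  have hXY : IsCompact (X ∩ Y) := hX.inter_right hY.isClosed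
  have hCcompact : IsCompact C := by
    have : CompactSpace (X ∩ Y : Set E2) := isCompact_iff_compactSpace.mp hXY
    rw [hCdef, connectedComponentIn_eq_image hx]
    exact isClosed_connectedComponent.isCompact.image continuous_subtype_val
  have hCc : IsClosed C := hCcompact.isClosed
  obtain ⟨R0, hR0⟩ := hCcompact.isBounded.subset_closedBall 0
  set R := max R0 0 with hRdef
  have hCball : C ⊆ closedBall 0 R :=
    hR0.trans (closedBall_subset_closedBall (le_max_left _ _))
  have hS : IsPathConnected (closedBall (0:E2) R)ᶜ :=
    isPathConnected_compl_closedBall_E2 (le_max_right _ _)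
  have hScC : (closedBall (0:E2) R)ᶜ ⊆ Cᶜ := compl_subset_compl.mpr hCball
  obtain ⟨p0, hp0, -⟩ := id hS
  constructor
  · exact ⟨p0, hScC hp0⟩
  · by_contra h
    rw [IsPreconnected] at h
    push_neg at h
    obtain ⟨u, v, hu, hv, hcov, hau, hbv, hint⟩ := h
    set u' := Cᶜ ∩ u with hu'
    set v' := Cᶜ ∩ v with hv'
    have hu'o : IsOpen u' := hCc.isOpen_compl.inter hu
    have hv'o : IsOpen v' := hCc.isOpen_compl.inter hv
    have hdisj : Disjoint u' v' := by
      rw [disjoint_iff_inter_eq_empty, ← hint]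
      ext y; constructor
      · rintro ⟨⟨hy1, hy2⟩, ⟨_, hy3⟩⟩; exact ⟨hy1, hy2, hy3⟩
      · rintro ⟨hy1, hy2, hy3⟩; exact ⟨⟨hy1, hy2⟩, ⟨hy1, hy3⟩⟩
    have hcov' : Cᶜ ⊆ u' ∪ v' := by
      intro y hy
      rcases hcov hy with h' | h'
      · exact Or.inl ⟨hy, h'⟩
      · exact Or.inr ⟨hy, h'⟩
    have hSsub : (closedBall (0:E2) R)ᶜ ⊆ u' ∪ v' := hScC.trans hcov'
    have hbdd : ∀ w' z' : Set E2, (closedBall (0:E2) R)ᶜ ⊆ w' → Disjoint w' z' →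
        IsBounded z' := by
      intro w' z' hw' hdw
      apply isBounded_closedBall.subset
      intro y hy
      by_contra hyb
      exact (disjoint_left.mp hdw (hw' hyb)) hy
    rcases hS.isConnected.isPreconnected.subset_or_subset hu'o hv'o hdisj hSsub with hside | hside
    · -- far region inside u', so v' is bounded
      exact side_absurd hX hY hXc hYc hx hCc hv'o hu'o hdisj.symm
        (hcov'.trans (union_comm u' v' ▸ subset_rfl))
        (hbdd u' v' hside hdisj) (by
          obtain ⟨b, hb1, hb2⟩ := hbv
          exact ⟨b, hb1, hb1, hb2⟩)
    · exact side_absurd hX hY hXc hYc hx hCc hu'o hv'o hdisj hcov'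
        (hbdd v' u' hside hdisj.symm) (by
          obtain ⟨b, hb1, hb2⟩ := hau
          exact ⟨b, hb1, hb1, hb2⟩)
end

section
/- Let C be a continuum in the plane ℝ² (a nonempty compact connected subset of ℝ²) such that ℝ² \ C is connected. Then the frontier Fr(C) of C in ℝ² is connected. -/
open Complex Set Metric

noncomputable section

namespace FrontierConnAux

/-- `f` admits a continuous logarithm on `K`. -/
def LogOn (f : ℂ → ℂ) (K : Set ℂ) : Prop :=
  ∃ h : ℂ → ℂ, ContinuousOn h K ∧ ∀ x ∈ K, Complex.exp (h x) = f x

lemma continuousOn_union_of_isClosed {X Y : Type*} [TopologicalSpace X] [TopologicalSpace Y]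
    {s t : Set X} {f : X → Y} (hs : IsClosed s) (ht : IsClosed t)
    (hfs : ContinuousOn f s) (hft : ContinuousOn f t) : ContinuousOn f (s ∪ t) := by
  intro x hx
  have h1 : ContinuousWithinAt f s x := by
    by_cases hxs : x ∈ s
    · exact hfs x hxs
    · exact continuousWithinAt_of_notMem_closure (by rwa [hs.closure_eq])
  have h2 : ContinuousWithinAt f t x := by
    by_cases hxt : x ∈ t
    · exact hft x hxt
    · exact continuousWithinAt_of_notMem_closure (by rwa [ht.closure_eq])
  exact h1.union h2

/-- Two continuous logarithms of the same function on a preconnected set differ by a constant. -/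
lemma sub_const_of_exp_eq {h₁ h₂ : ℂ → ℂ} {s : Set ℂ} (hs : IsPreconnected s)
    (hc₁ : ContinuousOn h₁ s) (hc₂ : ContinuousOn h₂ s)
    (he : ∀ x ∈ s, Complex.exp (h₁ x) = Complex.exp (h₂ x)) :
    ∀ x ∈ s, ∀ y ∈ s, h₁ x - h₂ x = h₁ y - h₂ y := by
  have key : ∀ x ∈ s, ∃ n : ℤ, h₁ x - h₂ x = n * (2 * Real.pi * I) := by
    intro x hx
    rw [← Complex.exp_eq_one_iff, Complex.exp_sub, he x hx,
      div_self (Complex.exp_ne_zero _)]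
  set d : ℂ → ℝ := fun x => (h₁ x - h₂ x).im with hd
  have hdc : ContinuousOn d s := Complex.continuous_im.comp_continuousOn (hc₁.sub hc₂)
  have him : IsPreconnected (d '' s) := hs.image d hdc
  have hsub : ∀ a ∈ d '' s, ∃ n : ℤ, a = n * (2 * Real.pi) := by
    rintro a ⟨x, hx, rfl⟩
    obtain ⟨n, hn⟩ := key x hx
    refine ⟨n, ?_⟩
    have h := congrArg Complex.im hn
    simpa [hd] using h
  have haux : ∀ a ∈ d '' s, ∀ b ∈ d '' s, a < b → False := by
    intro a ha b hb hab
    obtain ⟨n, rfl⟩ := hsub a ha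
    obtain ⟨m, rfl⟩ := hsub b hb
    have hnm : n < m := by
      have h2 : (0:ℝ) < 2 * Real.pi := by positivity
      exact_mod_cast lt_of_mul_lt_mul_right hab h2.le
    have hc : (n : ℝ) * (2 * Real.pi) + Real.pi ∈ d '' s := by
      apply him.Icc_subset ha hb
      constructor
      · nlinarith [Real.pi_pos]
      · have : (n : ℝ) + 1 ≤ m := by exact_mod_cast hnm
        nlinarith [Real.pi_pos]
    obtain ⟨k, hk⟩ := hsub _ hc
    have : ((2 * n + 1 : ℤ) : ℝ) * Real.pi = ((2 * k : ℤ) : ℝ) * Real.pi := by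
      push_cast
      linarith [hk]
    have := mul_right_cancel₀ Real.pi_ne_zero this
    have : (2 * n + 1 : ℤ) = 2 * k := by exact_mod_cast this
    omega
  have hsing : ∀ a ∈ d '' s, ∀ b ∈ d '' s, a = b := by
    intro a ha b hb
    rcases lt_trichotomy a b with h | h | h
    · exact absurd h (fun h => haux a ha b hb h)
    · exact h
    · exact absurd h (fun h => haux b hb a ha h)
  intro x hx y hy
  have hre : ∀ z ∈ s, (h₁ z - h₂ z).re = 0 := by
    intro z hz
    obtain ⟨n, hn⟩ := key z hz
    have h := congrArg Complex.re hn
    simpa using h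
  apply Complex.ext
  · rw [hre x hx, hre y hy]
  · exact hsing _ ⟨x, hx, rfl⟩ _ ⟨y, hy, rfl⟩

end FrontierConnAux
open Complex Set Metric FrontierConnAux

namespace FrontierConnAux

lemma LogOn.union {f : ℂ → ℂ} {s t : Set ℂ} (hs : IsClosed s) (ht : IsClosed t)
    (hne : (s ∩ t).Nonempty) (hconn : IsPreconnected (s ∩ t))
    (h1 : LogOn f s) (h2 : LogOn f t) : LogOn f (s ∪ t) := by
  classical
  obtain ⟨g₁, hg₁c, hg₁⟩ := h1
  obtain ⟨g₂, hg₂c, hg₂⟩ := h2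
  obtain ⟨x₀, hx₀⟩ := hne
  set c := g₁ x₀ - g₂ x₀ with hc
  have heq : ∀ x ∈ s ∩ t, g₁ x = g₂ x + c := by
    intro x hx
    have h := sub_const_of_exp_eq hconn (hg₁c.mono inter_subset_left)
      (hg₂c.mono inter_subset_right)
      (fun y hy => by rw [hg₁ y hy.1, hg₂ y hy.2]) x hx x₀ hx₀
    rw [hc, ← h]
    ring
  have hexpc : Complex.exp c = 1 := by
    rw [hc, Complex.exp_sub, hg₁ x₀ hx₀.1, hg₂ x₀ hx₀.2,
      div_self]
    rw [← hg₁ x₀ hx₀.1]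
    exact Complex.exp_ne_zero _
  refine ⟨s.piecewise g₁ (fun x => g₂ x + c), ?_, ?_⟩
  · apply continuousOn_union_of_isClosed hs ht
    · exact hg₁c.congr (fun x hx => piecewise_eq_of_mem _ _ _ hx)
    · refine (hg₂c.add (continuousOn_const (c := c))).congr ?_
      intro x hx
      by_cases hxs : x ∈ s
      · rw [piecewise_eq_of_mem _ _ _ hxs, heq x ⟨hxs, hx⟩]; rfl
      · rw [piecewise_eq_of_notMem _ _ _ hxs]; rfl
  · intro x hx
    by_cases hxs : x ∈ s
    · rw [piecewise_eq_of_mem _ _ _ hxs]; exact hg₁ x hxs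
    · rw [piecewise_eq_of_notMem _ _ _ hxs]
      rcases hx with h | h
      · exact absurd h hxs
      · rw [Complex.exp_add, hg₂ x h, hexpc, mul_one]

lemma logOn_small {f : ℂ → ℂ} {K : Set ℂ} (hf : Continuous f) (p : ℂ)
    (hsmall : ∀ x ∈ K, ‖f x - f p‖ < ‖f p‖) :
    LogOn f K := by
  rcases K.eq_empty_or_nonempty with rfl | ⟨q, hq⟩
  · exact ⟨0, continuousOn_empty _, by simp⟩
  have hfp : f p ≠ 0 := by
    intro h
    have := hsmall q hq
    rw [h] at this
    simp only [norm_zero] at this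
    exact absurd this (norm_nonneg _).not_gt
  have hmem : ∀ x ∈ K, f x / f p ∈ Complex.slitPlane := by
    intro x hx
    have h1 : ‖f x / f p - 1‖ < 1 := by
      rw [div_sub_one hfp]
      rw [norm_div]
      rw [div_lt_one (by simpa using (norm_pos_iff.mpr hfp))]
      simpa using hsmall x hx
    have := Complex.mem_slitPlane_of_norm_lt_one h1
    simpa using this
  have hfx : ∀ x ∈ K, f x ≠ 0 := by
    intro x hx h
    have := hsmall x hx
    rw [h] at this
    simp at this
  refine ⟨fun x => Complex.log (f x / f p) + Complex.log (f p), ?_, ?_⟩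
  · apply ContinuousOn.add _ continuousOn_const
    intro x hx
    apply ContinuousAt.continuousWithinAt
    exact ContinuousAt.comp (x := x) (g := Complex.log) (continuousAt_clog (hmem x hx))
      ((hf.continuousAt).div_const _)
  · intro x hx
    rw [Complex.exp_add, Complex.exp_log hfp, Complex.exp_log (div_ne_zero (hfx x hx) hfp),
      div_mul_cancel₀ _ hfp]

/-- Rectangles in the complex plane. -/
def Rect (a b c d : ℝ) : Set ℂ := Icc a b ×ℂ Icc c d

lemma isClosed_rect {a b c d : ℝ} : IsClosed (Rect a b c d) :=
  IsClosed.reProdIm isClosed_Icc isClosed_Icc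

lemma convex_rect {a b c d : ℝ} : Convex ℝ (Rect a b c d) := by
  intro x hx y hy pp qq hp hq hpq
  rw [Rect, mem_reProdIm] at *
  constructor
  · have := (convex_Icc a b) hx.1 hy.1 hp hq hpq
    simpa [Complex.smul_re, smul_eq_mul] using this
  · have := (convex_Icc c d) hx.2 hy.2 hp hq hpq
    simpa [Complex.smul_im, smul_eq_mul] using this

lemma preconnected_rect {a b c d : ℝ} : IsPreconnected (Rect a b c d) :=
  convex_rect.isPreconnected

lemma mem_rect {a b c d : ℝ} {z : ℂ} :
    z ∈ Rect a b c d ↔ (a ≤ z.re ∧ z.re ≤ b) ∧ (c ≤ z.im ∧ z.im ≤ d) := by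
  rw [Rect, mem_reProdIm, mem_Icc, mem_Icc]

lemma rect_nonempty {a b c d : ℝ} (hab : a ≤ b) (hcd : c ≤ d) :
    (Rect a b c d).Nonempty := by
  refine ⟨⟨a, c⟩, ?_⟩
  rw [mem_rect]
  constructor
  · constructor <;> simp [hab]
  · constructor <;> simp [hcd]

lemma rect_union_re {a b c d m : ℝ} (h1 : a ≤ m) (h2 : m ≤ b) :
    Rect a b c d = Rect a m c d ∪ Rect m b c d := by
  ext z
  simp only [mem_union, mem_rect]
  constructor
  · rintro ⟨⟨hza, hzb⟩, him⟩
    rcases le_total z.re m with h | h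
    · exact Or.inl ⟨⟨hza, h⟩, him⟩
    · exact Or.inr ⟨⟨h, hzb⟩, him⟩
  · rintro (⟨⟨hza, hzm⟩, him⟩ | ⟨⟨hzm, hzb⟩, him⟩)
    · exact ⟨⟨hza, hzm.trans h2⟩, him⟩
    · exact ⟨⟨h1.trans hzm, hzb⟩, him⟩

lemma rect_inter_re {a b c d m : ℝ} (h1 : a ≤ m) (h2 : m ≤ b) :
    Rect a m c d ∩ Rect m b c d = Rect m m c d := by
  ext z
  simp only [mem_inter_iff, mem_rect]
  constructor
  · rintro ⟨⟨⟨hza, hzm⟩, him⟩, ⟨hzm', hzb⟩, _⟩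
    exact ⟨⟨hzm', hzm⟩, him⟩
  · rintro ⟨⟨hzm, hzm'⟩, him⟩
    exact ⟨⟨⟨h1.trans hzm, hzm'⟩, him⟩, ⟨hzm, hzm'.trans h2⟩, him⟩

lemma rect_union_im {a b c d m : ℝ} (h1 : c ≤ m) (h2 : m ≤ d) :
    Rect a b c d = Rect a b c m ∪ Rect a b m d := by
  ext z
  simp only [mem_union, mem_rect]
  constructor
  · rintro ⟨hre, hzc, hzd⟩
    rcases le_total z.im m with h | h
    · exact Or.inl ⟨hre, hzc, h⟩
    · exact Or.inr ⟨hre, h, hzd⟩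
  · rintro (⟨hre, hzc, hzm⟩ | ⟨hre, hzm, hzd⟩)
    · exact ⟨hre, hzc, hzm.trans h2⟩
    · exact ⟨hre, h1.trans hzm, hzd⟩

lemma rect_inter_im {a b c d m : ℝ} (h1 : c ≤ m) (h2 : m ≤ d) :
    Rect a b c m ∩ Rect a b m d = Rect a b m m := by
  ext z
  simp only [mem_inter_iff, mem_rect]
  constructor
  · rintro ⟨⟨hre, _, hzm⟩, _, hzm', _⟩
    exact ⟨hre, hzm', hzm⟩
  · rintro ⟨hre, hzm, hzm'⟩
    exact ⟨⟨hre, h1.trans hzm, hzm'⟩, hre, hzm, hzm'.trans h2⟩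

lemma dist_le_of_mem_rect {a b c d : ℝ} {x p : ℂ} (hx : x ∈ Rect a b c d)
    (hp : p ∈ Rect a b c d) : dist x p ≤ (b - a) + (d - c) := by
  rw [mem_rect] at hx hp
  rw [Complex.dist_eq]
  calc ‖x - p‖ ≤ |(x - p).re| + |(x - p).im| :=
        Complex.norm_le_abs_re_add_abs_im _
    _ ≤ (b - a) + (d - c) := by
        apply add_le_add
        · rw [Complex.sub_re, abs_le]
          constructor <;> [linarith [hx.1.1, hx.1.2, hp.1.1, hp.1.2];
            linarith [hx.1.1, hx.1.2, hp.1.1, hp.1.2]]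
        · rw [Complex.sub_im, abs_le]
          constructor <;> [linarith [hx.2.1, hx.2.2, hp.2.1, hp.2.2];
            linarith [hx.2.1, hx.2.2, hp.2.1, hp.2.2]]

end FrontierConnAux
namespace FrontierConnAux

lemma rect_subset_rect {a b c d a' b' c' d' : ℝ} (h1 : a' ≤ a) (h2 : b ≤ b')
    (h3 : c' ≤ c) (h4 : d ≤ d') : Rect a b c d ⊆ Rect a' b' c' d' := by
  intro w hw
  rw [mem_rect] at hw ⊢
  refine ⟨⟨h1.trans hw.1.1, hw.1.2.trans h2⟩, ⟨h3.trans hw.2.1, hw.2.2.trans h4⟩⟩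

lemma logOn_row {f : ℂ → ℂ} (hf : Continuous f) {R s' : ℝ} (hs' : 0 < s')
    (hsmall : ∀ p x : ℂ, p ∈ Rect (-R) R (-R) R → x ∈ Rect (-R) R (-R) R →
      dist x p ≤ 2 * s' → ‖f x - f p‖ < ‖f p‖)
    {c d : ℝ} (hc : -R ≤ c) (hcd : c ≤ d) (hdR : d ≤ R) (hds : d ≤ c + s') :
    ∀ N : ℕ, -R + N * s' ≤ R → LogOn f (Rect (-R) (-R + N * s') c d) := by
  have hRR : -R ≤ R := by linarith
  intro N
  induction N with
  | zero =>
    intro _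
    simp only [Nat.cast_zero, zero_mul, add_zero]
    apply logOn_small hf (⟨-R, c⟩ : ℂ)
    intro x hx
    have hxm : x ∈ Rect (-R) (-R) c d := hx
    have hpm : (⟨-R, c⟩ : ℂ) ∈ Rect (-R) (-R) c d := by
      rw [mem_rect]
      exact ⟨⟨le_refl _, le_refl _⟩, ⟨le_refl _, hcd⟩⟩
    have hbig : Rect (-R) (-R) c d ⊆ Rect (-R) R (-R) R :=
      rect_subset_rect (le_refl _) hRR hc hdR
    apply hsmall _ _ (hbig hpm) (hbig hxm)
    calc dist x (⟨-R, c⟩ : ℂ) ≤ (-R - -R) + (d - c) := dist_le_of_mem_rect hxm hpm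
      _ ≤ 2 * s' := by linarith
  | succ k ih =>
    intro hNs
    have hks : (0:ℝ) ≤ (k : ℝ) * s' := by positivity
    have hNs' : -R + ((k : ℝ) + 1) * s' ≤ R := by push_cast at hNs; linarith
    have hk : -R + (k : ℝ) * s' ≤ R := by nlinarith
    have h0k : -R ≤ -R + (k : ℝ) * s' := by linarith
    have hkk1 : -R + (k : ℝ) * s' ≤ -R + ((k : ℝ) + 1) * s' := by nlinarith
    have hcast : ((k + 1 : ℕ) : ℝ) = (k : ℝ) + 1 := by push_cast; ring
    rw [hcast, rect_union_re h0k hkk1]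
    apply LogOn.union isClosed_rect isClosed_rect
    · rw [rect_inter_re h0k hkk1]
      exact rect_nonempty (le_refl _) hcd
    · rw [rect_inter_re h0k hkk1]
      exact preconnected_rect
    · exact ih hk
    · -- small piece
      apply logOn_small hf (⟨-R + (k : ℝ) * s', c⟩ : ℂ)
      intro x hx
      have hpm : (⟨-R + (k : ℝ) * s', c⟩ : ℂ) ∈
          Rect (-R + (k:ℝ)*s') (-R + ((k:ℝ)+1)*s') c d := by
        rw [mem_rect]
        exact ⟨⟨le_refl _, hkk1⟩, ⟨le_refl _, hcd⟩⟩
      have hbig : Rect (-R + (k:ℝ)*s') (-R + ((k:ℝ)+1)*s') c d ⊆ Rect (-R) R (-R) R :=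
        rect_subset_rect h0k hNs' hc hdR
      apply hsmall _ _ (hbig hpm) (hbig hx)
      calc dist x (⟨-R + (k : ℝ) * s', c⟩ : ℂ)
          ≤ ((-R + ((k:ℝ)+1)*s') - (-R + (k:ℝ)*s')) + (d - c) := dist_le_of_mem_rect hx hpm
        _ ≤ 2 * s' := by nlinarith

lemma logOn_square {f : ℂ → ℂ} (hf : Continuous f) {R s' : ℝ} (hs' : 0 < s') (hR : 0 < R)
    (hsmall : ∀ p x : ℂ, p ∈ Rect (-R) R (-R) R → x ∈ Rect (-R) R (-R) R →
      dist x p ≤ 2 * s' → ‖f x - f p‖ < ‖f p‖)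
    (N : ℕ) (hRN : -R + N * s' = R) :
    LogOn f (Rect (-R) R (-R) R) := by
  have hRR : -R ≤ R := by linarith
  have main : ∀ k : ℕ, k ≤ N → LogOn f (Rect (-R) R (-R) (-R + k * s')) := by
    intro k
    induction k with
    | zero =>
      intro _
      simp only [Nat.cast_zero, zero_mul, add_zero]
      have := logOn_row hf hs' hsmall (le_refl (-R)) (le_refl (-R)) hRR
        (by linarith) N hRN.le
      rwa [hRN] at this
    | succ k ih =>
      intro hkN
      have hkN' : k ≤ N := by omega
      have hks : (0:ℝ) ≤ (k : ℝ) * s' := by positivity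
      have hk1N : ((k:ℝ) + 1) * s' ≤ N * s' := by
        have : ((k:ℝ) + 1) ≤ N := by exact_mod_cast hkN
        nlinarith
      have hd1 : -R + ((k:ℝ)+1) * s' ≤ R := by linarith [hRN.le, hk1N]
      have h0k : -R ≤ -R + (k : ℝ) * s' := by linarith
      have hkk1 : -R + (k : ℝ) * s' ≤ -R + ((k : ℝ) + 1) * s' := by nlinarith
      have hcast : ((k + 1 : ℕ) : ℝ) = (k : ℝ) + 1 := by push_cast; ring
      rw [hcast, rect_union_im h0k hkk1]
      apply LogOn.union isClosed_rect isClosed_rect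
      · rw [rect_inter_im h0k hkk1]
        exact rect_nonempty hRR (le_refl _)
      · rw [rect_inter_im h0k hkk1]
        exact preconnected_rect
      · exact ih hkN'
      · have := logOn_row hf hs' hsmall h0k hkk1 hd1 (by linarith) N hRN.le
        rwa [hRN] at this
  have := main N (le_refl N)
  rwa [hRN] at this

lemma logOn_bigsquare {f : ℂ → ℂ} (hf : Continuous f) (h0 : ∀ z, f z ≠ 0)
    {R : ℝ} (hR : 0 < R) : LogOn f (Rect (-R) R (-R) R) := by
  set K := Rect (-R) R (-R) R with hK
  have hKcl : IsClosed K := isClosed_rect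
  have hKb : Bornology.IsBounded K :=
    Bornology.IsBounded.reProdIm (isBounded_Icc (-R) R) (isBounded_Icc (-R) R)
  have hKc : IsCompact K := Metric.isCompact_of_isClosed_isBounded hKcl hKb
  have hKne : K.Nonempty := rect_nonempty (by linarith) (by linarith)
  obtain ⟨p₀, hp₀, hmin'⟩ := hKc.exists_isMinOn hKne
    (continuous_norm.comp hf).continuousOn
  have hmin : ∀ y ∈ K, ‖f p₀‖ ≤ ‖f y‖ := fun y hy =>
    isMinOn_iff.mp hmin' y hy
  have hm : 0 < ‖f p₀‖ := norm_pos_iff.mpr (h0 p₀)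
  have huc : UniformContinuousOn f K := hKc.uniformContinuousOn_of_continuous hf.continuousOn
  rw [Metric.uniformContinuousOn_iff] at huc
  obtain ⟨δ, hδ, hucδ⟩ := huc _ hm
  set N : ℕ := ⌈4 * R / δ⌉₊ + 1 with hN
  have hNpos : 0 < (N : ℝ) := by positivity
  set s' : ℝ := 2 * R / N with hs'def
  have hs' : 0 < s' := by positivity
  have hNgt : 4 * R / δ < (N : ℝ) := by
    calc 4 * R / δ ≤ (⌈4 * R / δ⌉₊ : ℝ) := Nat.le_ceil _
      _ < N := by rw [hN]; push_cast; linarith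
  have h2s : 2 * s' < δ := by
    rw [hs'def]
    rw [div_lt_iff₀ hδ] at hNgt
    rw [mul_div_assoc', div_lt_iff₀ hNpos]
    nlinarith
  have hRN : -R + N * s' = R := by
    rw [hs'def]
    field_simp
    ring
  apply logOn_square hf hs' hR _ N hRN
  intro p x hp hx hdist
  have := hucδ x hx p hp (lt_of_le_of_lt hdist h2s)
  rw [Complex.dist_eq] at this
  exact lt_of_lt_of_le this (hmin p hp)

end FrontierConnAux
namespace FrontierConnAux

/-- The square `[-(n+1), n+1] × [-(n+1), n+1]`. -/
def Q (n : ℕ) : Set ℂ := Rect (-((n:ℝ)+1)) ((n:ℝ)+1) (-((n:ℝ)+1)) ((n:ℝ)+1)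

lemma exists_global_log {f : ℂ → ℂ} (hf : Continuous f) (h0 : ∀ z, f z ≠ 0) :
    ∃ v : ℂ → ℂ, Continuous v ∧ ∀ z, Complex.exp (v z) = f z := by
  have hmemQ : ∀ (z : ℂ) (n : ℕ), ‖z‖ ≤ (n:ℝ) + 1 → z ∈ Q n := by
    intro z n hz
    rw [Q, mem_rect]
    have h1 : |z.re| ≤ (n:ℝ) + 1 := (Complex.abs_re_le_norm z).trans hz
    have h2 : |z.im| ≤ (n:ℝ) + 1 := (Complex.abs_im_le_norm z).trans hz
    rw [abs_le] at h1 h2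
    exact ⟨⟨h1.1, h1.2⟩, ⟨h2.1, h2.2⟩⟩
  have h0Q : ∀ n : ℕ, (0:ℂ) ∈ Q n := by
    intro n
    apply hmemQ
    simp
    positivity
  have hQ : ∀ n : ℕ, ∃ h : ℂ → ℂ, ContinuousOn h (Q n) ∧ (∀ x ∈ Q n, Complex.exp (h x) = f x)
      ∧ h 0 = Complex.log (f 0) := by
    intro n
    obtain ⟨g, hgc, hg⟩ := logOn_bigsquare hf h0 (R := (n:ℝ)+1) (by positivity)
    refine ⟨fun x => g x - g 0 + Complex.log (f 0), ?_, ?_, by simp⟩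
    · exact (hgc.sub continuousOn_const).add continuousOn_const
    · intro x hx
      rw [Complex.exp_add, Complex.exp_sub, hg x hx, hg 0 (h0Q n),
        Complex.exp_log (h0 0), div_mul_cancel₀ _ (h0 0)]
  choose H Hc Hexp H0 using hQ
  have hQsub : ∀ {n₁ n₂ : ℕ}, n₁ ≤ n₂ → Q n₁ ⊆ Q n₂ := by
    intro n₁ n₂ h
    have h' : (n₁:ℝ) + 1 ≤ (n₂:ℝ) + 1 := by
      have : (n₁:ℝ) ≤ n₂ := by exact_mod_cast h
      linarith
    exact rect_subset_rect (by linarith) h' (by linarith) h'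
  have hagree : ∀ (n₁ n₂ : ℕ) (z : ℂ), z ∈ Q n₁ → z ∈ Q n₂ → H n₁ z = H n₂ z := by
    suffices h : ∀ n₁ n₂, n₁ ≤ n₂ → ∀ z ∈ Q n₁, H n₁ z = H n₂ z by
      intro n₁ n₂ z h1 h2
      rcases le_total n₁ n₂ with h' | h'
      · exact h _ _ h' z h1
      · exact (h _ _ h' z h2).symm
    intro n₁ n₂ hle z hz
    have hsub : Q n₁ ⊆ Q n₂ := hQsub hle
    have key := sub_const_of_exp_eq (s := Q n₁) preconnected_rect (Hc n₁) ((Hc n₂).mono hsub)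
      (fun y hy => by rw [Hexp n₁ y hy, Hexp n₂ y (hsub hy)]) z hz 0 (h0Q n₁)
    rw [H0, H0, sub_self] at key
    exact sub_eq_zero.mp key
  set v : ℂ → ℂ := fun z => H ⌊‖z‖⌋₊ z with hv
  have habs : ∀ z : ℂ, ‖z‖ ≤ (⌊‖z‖⌋₊ : ℝ) + 1 :=
    fun z => (Nat.lt_floor_add_one _).le
  have hvQ : ∀ (z : ℂ) (n : ℕ), z ∈ Q n → v z = H n z := by
    intro z n hz
    exact hagree _ _ z (hmemQ z _ (habs z)) hz
  refine ⟨v, ?_, ?_⟩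
  · rw [continuous_iff_continuousAt]
    intro z
    set n := ⌊‖z‖⌋₊ with hn
    have hball : Metric.ball (0:ℂ) ((n:ℝ)+1) ⊆ Q n := by
      intro w hw
      rw [Metric.mem_ball, Complex.dist_eq, sub_zero] at hw
      exact hmemQ w n hw.le
    have hznb : z ∈ Metric.ball (0:ℂ) ((n:ℝ)+1) := by
      rw [Metric.mem_ball, Complex.dist_eq, sub_zero]
      exact Nat.lt_floor_add_one _
    have hballn : Metric.ball (0:ℂ) ((n:ℝ)+1) ∈ nhds z :=
      Metric.isOpen_ball.mem_nhds hznb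
    have hH : ContinuousAt (H n) z :=
      (Hc n).continuousAt (Filter.mem_of_superset hballn hball)
    apply hH.congr
    filter_upwards [hballn] with w hw
    exact (hvQ w n (hball hw)).symm
  · intro z
    exact Hexp _ z (hmemQ z _ (habs z))

end FrontierConnAux
namespace FrontierConnAux

theorem main (C : Set ℂ) (hC : IsCompact C) (hCconn : IsConnected C)
    (hcompl : IsConnected Cᶜ) : IsConnected (frontier C) := by
  classical
  have hCclosed : IsClosed C := hC.isClosed
  have hfrC : frontier C = C ∩ closure Cᶜ := by
    rw [frontier_eq_closure_inter_closure, hCclosed.closure_eq]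
  have hfrne : (frontier C).Nonempty := by
    rw [nonempty_frontier_iff]
    refine ⟨hCconn.nonempty, fun h => ?_⟩
    have : Cᶜ = ∅ := by rw [h, Set.compl_univ]
    exact hcompl.nonempty.ne_empty this
  refine ⟨hfrne, ?_⟩
  by_contra hnot
  rw [isPreconnected_iff_subset_of_fully_disjoint_closed isClosed_frontier] at hnot
  push_neg at hnot
  obtain ⟨t₁, t₂, ht₁, ht₂, hsub, hdisj, hn1, hn2⟩ := hnot
  set A : Set ℂ := frontier C ∩ t₁ with hA
  set B : Set ℂ := frontier C ∩ t₂ with hB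
  have hAcl : IsClosed A := isClosed_frontier.inter ht₁
  have hBcl : IsClosed B := isClosed_frontier.inter ht₂
  have hABdisj : Disjoint A B :=
    (hdisj.mono Set.inter_subset_right Set.inter_subset_right)
  have hABunion : frontier C ⊆ A ∪ B := by
    intro x hx
    rcases hsub hx with h | h
    · exact Or.inl ⟨hx, h⟩
    · exact Or.inr ⟨hx, h⟩
  have hAne : A.Nonempty := by
    rcases Set.not_subset.mp hn2 with ⟨x, hx, hxt2⟩
    rcases hsub hx with h | h
    · exact ⟨x, hx, h⟩
    · exact absurd h hxt2
  have hBne : B.Nonempty := by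
    rcases Set.not_subset.mp hn1 with ⟨x, hx, hxt1⟩
    rcases hsub hx with h | h
    · exact absurd h hxt1
    · exact ⟨x, hx, h⟩
  -- Urysohn function
  obtain ⟨u, hu0, hu1, hu01⟩ := exists_continuous_zero_one_of_isClosed hAcl hBcl hABdisj
  set w : ℂ → ℝ := fun x => Real.pi * u x with hw
  have hwc : Continuous w := continuous_const.mul u.continuous
  have hwA : ∀ x ∈ A, w x = 0 := by
    intro x hx
    simp [hw, hu0 hx]
  have hwB : ∀ x ∈ B, w x = Real.pi := by
    intro x hx
    simp [hw, hu1 hx]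
  -- the glued circle-valued function
  set g : ℂ → ℂ := C.piecewise (fun x => Complex.exp ((w x : ℂ) * Complex.I))
    (fun x => Complex.exp (-(w x : ℂ) * Complex.I)) with hg
  have hfr_eq : ∀ a ∈ frontier C,
      Complex.exp ((w a : ℂ) * Complex.I) = Complex.exp (-(w a : ℂ) * Complex.I) := by
    intro a ha
    rcases hABunion ha with h | h
    · rw [hwA a h]
      norm_num
    · rw [hwB a h]
      rw [Complex.exp_pi_mul_I, neg_mul, Complex.exp_neg, Complex.exp_pi_mul_I]
      norm_num
  have hgc : Continuous g := by
    apply Continuous.piecewise hfr_eq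
    · exact Complex.continuous_exp.comp ((Complex.continuous_ofReal.comp hwc).mul continuous_const)
    · exact Complex.continuous_exp.comp
        (((Complex.continuous_ofReal.comp hwc).neg).mul continuous_const)
  have hg0 : ∀ z, g z ≠ 0 := by
    intro z
    rw [hg]
    by_cases hz : z ∈ C
    · rw [Set.piecewise_eq_of_mem _ _ _ hz]
      exact Complex.exp_ne_zero _
    · rw [Set.piecewise_eq_of_notMem _ _ _ hz]
      exact Complex.exp_ne_zero _
  obtain ⟨v, hvc, hv⟩ := exists_global_log hgc hg0
  -- On C, exp (v x) = exp (w x * I)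
  have honC : ∀ x ∈ C, Complex.exp (v x) = Complex.exp ((w x : ℂ) * Complex.I) := by
    intro x hx
    rw [hv x, hg, Set.piecewise_eq_of_mem _ _ _ hx]
  -- On closure Cᶜ, exp (v x) = exp (-(w x) * I)
  set N : Set ℂ := closure Cᶜ with hN
  have honN : ∀ x ∈ N, Complex.exp (v x) = Complex.exp (-(w x : ℂ) * Complex.I) := by
    intro x hx
    by_cases hxC : x ∈ C
    · have hxf : x ∈ frontier C := by
        rw [hfrC]
        exact ⟨hxC, hx⟩
      rw [hv x, hg, Set.piecewise_eq_of_mem _ _ _ hxC]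
      exact hfr_eq x hxf
    · rw [hv x, hg, Set.piecewise_eq_of_notMem _ _ _ hxC]
  obtain ⟨a, ha⟩ := hAne
  obtain ⟨b, hb⟩ := hBne
  have haf : a ∈ frontier C := ha.1
  have hbf : b ∈ frontier C := hb.1
  have haC : a ∈ C := by rw [hfrC] at haf; exact haf.1
  have hbC : b ∈ C := by rw [hfrC] at hbf; exact hbf.1
  have haN : a ∈ N := by rw [hfrC] at haf; exact haf.2
  have hbN : b ∈ N := by rw [hfrC] at hbf; exact hbf.2
  have hNpre : IsPreconnected N := hcompl.isPreconnected.closure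
  have hconstC := sub_const_of_exp_eq hCconn.isPreconnected hvc.continuousOn
    ((Complex.continuous_ofReal.comp hwc).mul continuous_const).continuousOn
    honC a haC b hbC
  have hconstN := sub_const_of_exp_eq hNpre hvc.continuousOn
    (((Complex.continuous_ofReal.comp hwc).neg).mul continuous_const).continuousOn
    honN a haN b hbN
  simp only [Pi.mul_apply, Pi.neg_apply, Function.comp_apply, hwA a ha, hwB b hb] at hconstC hconstN
  push_cast at hconstC hconstN
  have hpi : (Real.pi : ℂ) * Complex.I = 0 := by
    linear_combination (hconstC - hconstN) / 2
  have : (Real.pi : ℂ) = 0 ∨ Complex.I = 0 := mul_eq_zero.mp hpi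
  rcases this with h | h
  · exact Real.pi_ne_zero (by exact_mod_cast h)
  · exact Complex.I_ne_zero h

end FrontierConnAux
end

/-- If `C` is a continuum in the plane (a nonempty compact connected set) whose complement
is connected, then the frontier of `C` is connected. -/
theorem frontier_connected_of_compl_connected
    (C : Set (EuclideanSpace ℝ (Fin 2)))
    (hC : IsCompact C) (hCconn : IsConnected C) (hcompl : IsConnected Cᶜ) :
    IsConnected (frontier C) := by
  let e : EuclideanSpace ℝ (Fin 2) ≃ₜ ℂ :=
    ((EuclideanSpace.equiv (Fin 2) ℝ).toHomeomorph.trans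
      (Homeomorph.piFinTwo (fun _ => ℝ))).trans Complex.equivRealProdCLM.toHomeomorph.symm
  have h1 : IsConnected (frontier (e '' C)) := by
    apply FrontierConnAux.main
    · exact hC.image e.continuous
    · exact hCconn.image e e.continuous.continuousOn
    · rw [← Set.image_compl_eq e.bijective]
      exact hcompl.image e e.continuous.continuousOn
  rw [← e.image_frontier] at h1
  have h2 : IsConnected (e.symm '' (e '' frontier C)) :=
    h1.image e.symm e.symm.continuous.continuousOn
  rwa [Set.image_image, funext (fun x => e.symm_apply_apply x), Set.image_id'] at h2
end

section
/- Every continuum in the plane ℝ² that is contained in the union of finitely many arcs is locally connected. -/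
open Filter Set Metric Topology

variable {X : Type*} [MetricSpace X]

/-- Boundary bumping lemma: in a compact preconnected set `Z`, the connected component of a
point `p` in a closed subset `F ⊊ Z` meets the closure of `Z \ F`. -/
lemma bumping {Z F : Set X} (hZc : IsCompact Z) (hZconn : IsPreconnected Z)
    (hF : IsClosed F) (hFZ : F ⊆ Z) (hne : (Z \ F).Nonempty) {p : X} (hp : p ∈ F) :
    (connectedComponentIn F p ∩ closure (Z \ F)).Nonempty := by
  by_contra hcon
  rw [Set.not_nonempty_iff_eq_empty] at hcon
  have hFc : IsCompact F := IsCompact.of_isClosed_subset hZc hF hFZ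
  haveI : CompactSpace F := isCompact_iff_compactSpace.mp hFc
  set D : Set F := Subtype.val ⁻¹' closure (Z \ F) with hD
  have hDclosed : IsClosed D := isClosed_closure.preimage continuous_subtype_val
  have hDc : IsCompact D := hDclosed.isCompact
  have himg : connectedComponentIn F p = Subtype.val '' connectedComponent ⟨p, hp⟩ :=
    connectedComponentIn_eq_image hp
  -- the component misses D
  have hcompD : D ∩ ⋂ s : {s : Set F // IsClopen s ∧ (⟨p, hp⟩ : F) ∈ s}, (s : Set F) = ∅ := by
    rw [← connectedComponent_eq_iInter_isClopen]
    rw [Set.eq_empty_iff_forall_notMem]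
    rintro q ⟨hqD, hqC⟩
    have : (q : X) ∈ connectedComponentIn F p ∩ closure (Z \ F) :=
      ⟨himg ▸ ⟨q, hqC, rfl⟩, hqD⟩
    rw [hcon] at this; exact this
  haveI : Nonempty {s : Set F // IsClopen s ∧ (⟨p, hp⟩ : F) ∈ s} :=
    ⟨⟨Set.univ, isClopen_univ, Set.mem_univ _⟩⟩
  obtain ⟨V, hV⟩ := IsCompact.elim_directed_family_closed hDc
    (fun s : {s : Set F // IsClopen s ∧ (⟨p, hp⟩ : F) ∈ s} => (s : Set F))
    (fun s => s.2.1.isClosed) hcompD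
    (fun s t => ⟨⟨s.1 ∩ t.1, s.2.1.inter t.2.1, s.2.2, t.2.2⟩,
      Set.inter_subset_left, Set.inter_subset_right⟩)
  -- V is a clopen subset of F containing p and missing D
  set V' : Set X := Subtype.val '' (V : Set F) with hV'
  have hV'F : V' ⊆ F := by rintro _ ⟨q, _, rfl⟩; exact q.2
  have hV'compact : IsCompact V' :=
    (V.2.1.isClosed.isCompact).image continuous_subtype_val
  have hV'closed : IsClosed V' := hV'compact.isClosed
  have hV'cl : V' ∩ closure (Z \ F) = ∅ := by
    rw [Set.eq_empty_iff_forall_notMem]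
    rintro q ⟨⟨q', hq', rfl⟩, hq2⟩
    have : q' ∈ D ∩ V.1 := ⟨hq2, hq'⟩
    rw [hV] at this; exact this
  have hpV' : p ∈ V' := ⟨⟨p, hp⟩, V.2.2, rfl⟩
  -- V is open in F, so V' = O ∩ F for some open O
  obtain ⟨O, hO, hOV⟩ := isOpen_induced_iff.mp V.2.1.isOpen
  have hV'O : V' = O ∩ F := by
    rw [hV', ← hOV, Subtype.image_preimage_coe]
    exact Set.inter_comm _ _
  -- apply connectedness of Z
  obtain ⟨w, hwZ, hw⟩ := hZconn (O ∩ (closure (Z \ F))ᶜ) (V')ᶜ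
    (hO.inter isClosed_closure.isOpen_compl) hV'closed.isOpen_compl
    (by
      intro z hz
      by_cases hzV : z ∈ V'
      · left
        refine ⟨(hV'O ▸ hzV).1, ?_⟩
        intro hcl
        rw [Set.eq_empty_iff_forall_notMem] at hV'cl
        exact hV'cl z ⟨hzV, hcl⟩
      · right; exact hzV)
    ⟨p, hFZ hp, (hV'O ▸ hpV').1, by
      intro hcl
      rw [Set.eq_empty_iff_forall_notMem] at hV'cl
      exact hV'cl p ⟨hpV', hcl⟩⟩
    (by
      obtain ⟨c, hc⟩ := hne
      exact ⟨c, hc.1, fun hcV => hc.2 (hV'F hcV)⟩)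
  -- contradiction
  rcases hw with ⟨⟨hwO, hwcl⟩, hwV⟩
  have hwF : w ∈ F := by
    by_contra hwF
    exact hwcl (subset_closure ⟨hwZ, hwF⟩)
  exact hwV (hV'O ▸ ⟨hwO, hwF⟩)

lemma limsup_mem (Q : ℕ → Set X) {w : ℕ → X} {ψ : ℕ → ℕ}
    (hψ : ∀ k, k ≤ ψ k) (hw : ∀ k, w k ∈ Q (ψ k)) {a : X}
    (ha : Tendsto w atTop (𝓝 a)) :
    a ∈ ⋂ N : ℕ, closure (⋃ m ∈ Ici N, Q m) := by
  rw [Set.mem_iInter]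
  intro N
  refine mem_closure_of_tendsto ha ?_
  filter_upwards [eventually_ge_atTop N] with k hk
  exact Set.mem_biUnion (le_trans hk (hψ k)) (hw k)

lemma limsup_preconnected {K : Set X} (hK : IsCompact K) (Q : ℕ → Set X)
    (hQK : ∀ m, Q m ⊆ K) (hQc : ∀ m, IsPreconnected (Q m))
    (y : ℕ → X) (hy : ∀ m, y m ∈ Q m) {x : X} (hx : Tendsto y atTop (𝓝 x)) :
    IsPreconnected (⋂ N : ℕ, closure (⋃ m ∈ Ici N, Q m)) := by
  set L : Set X := ⋂ N : ℕ, closure (⋃ m ∈ Ici N, Q m) with hLdef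
  have hLclosed : IsClosed L := isClosed_iInter (fun N => isClosed_closure)
  have hxL : x ∈ L := limsup_mem Q (ψ := fun k => k) (fun k => le_refl k) hy hx
  have hLK : L ⊆ K := by
    intro z hz
    rw [Set.mem_iInter] at hz
    have := hz 0
    have hsub : closure (⋃ m ∈ Ici 0, Q m) ⊆ K := by
      rw [← hK.isClosed.closure_eq]
      exact closure_mono (Set.iUnion₂_subset fun m _ => hQK m)
    exact hsub this
  -- main auxiliary claim
  have main : ∀ u v : Set X, IsClosed u → IsClosed v → L ⊆ u ∪ v → Disjoint u v →
      x ∈ u → (L ∩ v).Nonempty → False := by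
    intro u v hu hv hsub hdisj hxu ⟨b, hbL, hbv⟩
    have hAc : IsCompact (L ∩ u) := (hK.of_isClosed_subset hLclosed hLK).inter_right hu
    have hBc : IsCompact (L ∩ v) := (hK.of_isClosed_subset hLclosed hLK).inter_right hv
    have hABdisj : Disjoint (L ∩ u) (L ∩ v) :=
      hdisj.mono Set.inter_subset_right Set.inter_subset_right
    obtain ⟨U, V, hUopen, hVopen, hAU, hBV, hUV⟩ :=
      SeparatedNhds.of_isCompact_isCompact hAc hBc hABdisj
    -- eventually Q m meets U
    have hU_ev : ∀ᶠ m in atTop, (Q m ∩ U).Nonempty := by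
      have hxU : x ∈ U := hAU ⟨hxL, hxu⟩
      filter_upwards [hx.eventually (hUopen.mem_nhds hxU)] with m hm
      exact ⟨y m, hy m, hm⟩
    -- frequently Q m meets V
    have hV_freq : ∃ᶠ m in atTop, (Q m ∩ V).Nonempty := by
      rw [frequently_atTop]
      intro N
      have hbcl : b ∈ closure (⋃ m ∈ Ici N, Q m) := by
        rw [hLdef, Set.mem_iInter] at hbL; exact hbL N
      have hbV : b ∈ V := hBV ⟨hbL, hbv⟩
      rw [_root_.mem_closure_iff] at hbcl
      obtain ⟨z, hzV, hzU⟩ := hbcl V hVopen hbV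
      obtain ⟨m, hmN, hzm⟩ := Set.mem_iUnion₂.mp hzU
      exact ⟨m, hmN, ⟨z, hzm, hzV⟩⟩
    have hboth : ∃ᶠ m in atTop, (Q m ∩ V).Nonempty ∧ (Q m ∩ U).Nonempty :=
      hV_freq.and_eventually hU_ev
    rw [frequently_atTop] at hboth
    -- choose indices and points outside U ∪ V
    choose ψ hψ₁ hψ₂ using hboth
    have hw : ∀ N, ∃ w, w ∈ Q (ψ N) ∧ w ∉ U ∪ V := by
      intro N
      by_contra hcon
      push_neg at hcon
      have hQsub : Q (ψ N) ⊆ U ∪ V := fun z hz => hcon z hz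
      obtain ⟨z, hz⟩ := (hQc (ψ N)) U V hUopen hVopen hQsub (hψ₂ N).2 (hψ₂ N).1
      exact (hUV.ne_of_mem hz.2.1 hz.2.2) rfl
    choose w hw₁ hw₂ using hw
    have hwD : ∀ N, w N ∈ K \ (U ∪ V) := fun N => ⟨hQK _ (hw₁ N), hw₂ N⟩
    have hDc : IsCompact (K \ (U ∪ V)) := hK.diff (hUopen.union hVopen)
    obtain ⟨a, haD, φ, hφ, hφtendsto⟩ := hDc.tendsto_subseq hwD
    have haL : a ∈ L := by
      refine limsup_mem Q (ψ := fun k => ψ (φ k)) (fun k => ?_) (fun k => hw₁ (φ k)) hφtendsto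
      exact le_trans (hφ.le_apply) (hψ₁ (φ k))
    rcases hsub haL with hau | hav
    · exact haD.2 (Or.inl (hAU ⟨haL, hau⟩))
    · exact haD.2 (Or.inr (hBV ⟨haL, hav⟩))
  rw [isPreconnected_iff_subset_of_fully_disjoint_closed hLclosed]
  intro u v hu hv hsub hdisj
  rcases hsub hxL with hxu | hxv
  · by_cases hLv : (L ∩ v).Nonempty
    · exact absurd (main u v hu hv hsub hdisj hxu hLv) (fun h => h)
    · left
      intro z hz
      rcases hsub hz with h | h
      · exact h
      · exact absurd ⟨z, hz, h⟩ hLv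
  · by_cases hLu : (L ∩ u).Nonempty
    · exact absurd (main v u hv hu (by rwa [Set.union_comm]) hdisj.symm hxv hLu) (fun h => h)
    · right
      intro z hz
      rcases hsub hz with h | h
      · exact absurd ⟨z, hz, h⟩ hLu
      · exact h

lemma descent {n : ℕ} (f : Fin n → unitInterval → X)
    (hfc : ∀ i, Continuous (f i)) (hfi : ∀ i, Function.Injective (f i))
    (K Q : Set X) (hKcov : K ⊆ ⋃ i, range (f i)) :
    ∀ N : ℕ, ∀ S : Finset (Fin n), S.card ≤ N → ∀ Y : Set X,
      Y ⊆ Q → IsCompact Y → IsPreconnected Y → Y.Nontrivial →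
      (∀ p ∈ Y, p ∈ closure (K \ Q)) →
      Y ⊆ ⋃ j ∈ S, range (f j) →
      (∀ j ∉ S, ∀ t : unitInterval, f j t ∈ Y →
        ∃ ζ > 0, ∀ s : unitInterval, |s.1 - t.1| ≤ ζ → f j s ∈ Q) → False := by
  intro N
  induction N with
  | zero =>
    intro S hcard Y hYQ hYc hYconn hYnt hYcl hYS hout
    rw [Nat.le_zero, Finset.card_eq_zero] at hcard
    subst hcard
    obtain ⟨y, hy⟩ := hYnt.nonempty
    simpa using hYS hy
  | succ N ih =>
    intro S hcard Y hYQ hYc hYconn hYnt hYcl hYS hout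
    -- Baire category: some arc piece has interior in Y
    haveI : CompactSpace Y := isCompact_iff_compactSpace.mp hYc
    haveI : Nonempty Y := hYnt.nonempty.to_subtype
    have hclosed : ∀ j : Fin n, IsClosed ((Subtype.val ⁻¹' range (f j)) : Set Y) :=
      fun j => ((isCompact_range (hfc j)).isClosed).preimage continuous_subtype_val
    have hcover : ⋃ j : {j // j ∈ S}, ((Subtype.val ⁻¹' range (f j.1)) : Set Y) = univ := by
      ext q
      simp only [Set.mem_iUnion, Set.mem_univ, iff_true, Set.mem_preimage]
      obtain ⟨j, hjS, hj⟩ := Set.mem_iUnion₂.mp (hYS q.2)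
      exact ⟨⟨j, hjS⟩, hj⟩
    obtain ⟨⟨j, hjS⟩, hint⟩ := nonempty_interior_of_iUnion_of_closed
      (fun j : {j // j ∈ S} => hclosed j.1) hcover
    obtain ⟨p₀, hp₀⟩ := hint
    rw [mem_interior_iff_mem_nhds, Metric.mem_nhds_iff] at hp₀
    obtain ⟨r, hr, hball⟩ := hp₀
    -- a second point of Y
    obtain ⟨q₀, hq₀Y, hq₀ne⟩ := hYnt.exists_ne p₀.1
    have hd : 0 < dist q₀ p₀.1 := dist_pos.mpr hq₀ne
    set r' : ℝ := min (r / 2) (dist q₀ p₀.1 / 2) with hr'def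
    have hr'pos : 0 < r' := lt_min (by linarith) (by linarith)
    have hr'r : r' < r := lt_of_le_of_lt (min_le_left _ _) (by linarith)
    -- boundary bumping inside Y
    set F₀ : Set X := Y ∩ closedBall p₀.1 r' with hF₀def
    have hq₀F : q₀ ∈ Y \ F₀ := by
      refine ⟨hq₀Y, fun hf => ?_⟩
      have := hf.2
      rw [mem_closedBall] at this
      have : dist q₀ p₀.1 ≤ dist q₀ p₀.1 / 2 := le_trans this (min_le_right _ _)
      linarith
    have hp₀F : p₀.1 ∈ F₀ := ⟨p₀.2, mem_closedBall_self hr'pos.le⟩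
    obtain ⟨w, hwP, hwcl⟩ := bumping hYc hYconn
      (hYc.isClosed.inter Metric.isClosed_closedBall) Set.inter_subset_left ⟨q₀, hq₀F⟩ hp₀F
    set P : Set X := connectedComponentIn F₀ p₀.1 with hPdef
    have hPF : P ⊆ F₀ := connectedComponentIn_subset _ _
    have hwne : w ≠ p₀.1 := by
      have hsub : Y \ F₀ ⊆ {z | r' ≤ dist z p₀.1} := by
        intro z hz
        have : z ∉ closedBall p₀.1 r' := fun hc => hz.2 ⟨hz.1, hc⟩
        rw [mem_closedBall] at this
        exact le_of_lt (lt_of_not_ge this)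
      have hclosed' : IsClosed {z | r' ≤ dist z p₀.1} :=
        isClosed_le continuous_const (continuous_id.dist continuous_const)
      have := closure_minimal hsub hclosed' hwcl
      intro h
      rw [h] at this
      simp only [Set.mem_setOf_eq, dist_self] at this
      linarith
    have hPrange : P ⊆ range (f j) := by
      intro z hz
      have hzF := hPF hz
      have : (⟨z, hzF.1⟩ : Y) ∈ Metric.ball p₀ r := by
        rw [Metric.mem_ball, Subtype.dist_eq]
        exact lt_of_le_of_lt (mem_closedBall.mp hzF.2) hr'r
      exact hball this
    have hPY : P ⊆ Y := hPF.trans Set.inter_subset_left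
    have hPQ : P ⊆ Q := hPY.trans hYQ
    -- parameter interval
    have hembj : IsClosedEmbedding (f j) := (hfc j).isClosedEmbedding (hfi j)
    set T : Set unitInterval := f j ⁻¹' P with hTdef
    have himgT : f j '' T = P := by
      rw [hTdef, Set.image_preimage_eq_inter_range]
      exact Set.inter_eq_self_of_subset_left hPrange
    have hTpre : IsPreconnected T := by
      have := hembj.isEmbedding.isInducing.isPreconnected_image (s := T)
      rw [himgT] at this
      exact this.mp isPreconnected_connectedComponentIn
    set T' : Set ℝ := Subtype.val '' T with hT'def
    have hT'pre : IsPreconnected T' := hTpre.image _ continuous_subtype_val.continuousOn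
    have hT'01 : T' ⊆ Icc (0:ℝ) 1 := by rintro _ ⟨s, _, rfl⟩; exact s.2
    have hp₀P : p₀.1 ∈ P := mem_connectedComponentIn hp₀F
    obtain ⟨tp, htp⟩ := hPrange hp₀P
    obtain ⟨tw, htw⟩ := hPrange hwP
    have htpT' : tp.1 ∈ T' := ⟨tp, by rw [hTdef, Set.mem_preimage, htp]; exact hp₀P, rfl⟩
    have htwT' : tw.1 ∈ T' := ⟨tw, by rw [hTdef, Set.mem_preimage, htw]; exact hwP, rfl⟩
    have htptw : tp.1 ≠ tw.1 := by
      intro h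
      have : tp = tw := Subtype.ext h
      rw [this, htw] at htp
      exact hwne htp
    obtain ⟨α, β, hαβ, hαT', hβT'⟩ : ∃ α β : ℝ, α < β ∧ α ∈ T' ∧ β ∈ T' := by
      rcases htptw.lt_or_gt with h | h
      · exact ⟨tp.1, tw.1, h, htpT', htwT'⟩
      · exact ⟨tw.1, tp.1, h, htwT', htpT'⟩
    have hIccT' : Icc α β ⊆ T' := hT'pre.Icc_subset hαT' hβT'
    have hIccP : ∀ s : unitInterval, s.1 ∈ Icc α β → f j s ∈ P := by
      intro s hs
      obtain ⟨s₂, hs₂T, hs₂⟩ := hIccT' hs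
      have : s₂ = s := Subtype.ext hs₂
      rw [← this]
      exact hs₂T
    set ζ : ℝ := (β - α) / 3 with hζdef
    have hζpos : 0 < ζ := by rw [hζdef]; linarith
    set α' : ℝ := α + ζ with hα'def
    set β' : ℝ := β - ζ with hβ'def
    have hαα' : α < α' := by rw [hα'def]; linarith
    have hα'β' : α' < β' := by rw [hα'def, hβ'def, hζdef]; linarith
    have hβ'β : β' < β := by rw [hβ'def]; linarith
    have hsubIcc : Icc α' β' ⊆ Icc α β := Icc_subset_Icc hαα'.le hβ'β.le
    have hα'01 : α' ∈ Icc (0:ℝ) 1 := hT'01 (hIccT' ⟨hαα'.le, by linarith⟩)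
    have hβ'01 : β' ∈ Icc (0:ℝ) 1 := hT'01 (hIccT' ⟨by linarith, hβ'β.le⟩)
    -- the new continuum
    set Y' : Set X := f j '' (Subtype.val ⁻¹' Icc α' β') with hY'def
    have hY'P : Y' ⊆ P := by
      rintro _ ⟨t, ht, rfl⟩
      exact hIccP t (hsubIcc ht)
    have hY'Y : Y' ⊆ Y := hY'P.trans hPY
    have hY'Q : Y' ⊆ Q := hY'P.trans hPQ
    have hY'c : IsCompact Y' :=
      ((isClosed_Icc.preimage continuous_subtype_val).isCompact).image (hfc j)
    have hY'pre : IsPreconnected Y' := by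
      have hEq : (Subtype.val ⁻¹' Icc α' β' : Set unitInterval)
          = projIcc 0 1 zero_le_one '' Icc α' β' := by
        ext s
        constructor
        · intro hs
          exact ⟨s.1, hs, by rw [projIcc_of_mem zero_le_one s.2]⟩
        · rintro ⟨t, ht, rfl⟩
          have ht01 : t ∈ Icc (0:ℝ) 1 := ⟨le_trans hα'01.1 ht.1, le_trans ht.2 hβ'01.2⟩
          rw [Set.mem_preimage, projIcc_of_mem zero_le_one ht01]
          exact ht
      rw [hY'def, hEq]
      exact ((isPreconnected_Icc.image _ continuous_projIcc.continuousOn).image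
        _ (hfc j).continuousOn)
    have hY'nt : Y'.Nontrivial := by
      refine ⟨f j ⟨α', hα'01⟩, ⟨⟨α', hα'01⟩, ⟨le_refl _, hα'β'.le⟩, rfl⟩,
        f j ⟨β', hβ'01⟩, ⟨⟨β', hβ'01⟩, ⟨hα'β'.le, le_refl _⟩, rfl⟩, ?_⟩
      intro h
      have := hfi j h
      rw [Subtype.ext_iff] at this
      exact absurd this (ne_of_lt hα'β')
    have hY'cl : ∀ p ∈ Y', p ∈ closure (K \ Q) := fun p hp => hYcl p (hY'Y hp)
    -- Y' is covered by the remaining arcs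
    have hrangeclosed : ∀ i : Fin n, IsClosed (range (f i)) :=
      fun i => (isCompact_range (hfc i)).isClosed
    have hY'S : Y' ⊆ ⋃ i ∈ S.erase j, range (f i) := by
      rintro _ ⟨t, ht, rfl⟩
      have hycl : f j t ∈ closure (K \ Q) := hYcl _ (hY'Y ⟨t, ht, rfl⟩)
      have hcov2 : K \ Q ⊆ ⋃ i, ((K \ Q) ∩ range (f i)) := by
        intro z hz
        obtain ⟨i, hi⟩ := Set.mem_iUnion.mp (hKcov hz.1)
        exact Set.mem_iUnion.mpr ⟨i, hz, hi⟩
      have hclosedU : IsClosed (⋃ i, closure ((K \ Q) ∩ range (f i))) :=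
        isClosed_iUnion_of_finite (fun i => isClosed_closure)
      have : f j t ∈ ⋃ i, closure ((K \ Q) ∩ range (f i)) := by
        refine closure_minimal ?_ hclosedU hycl
        exact hcov2.trans (Set.iUnion_mono (fun i => subset_closure))
      obtain ⟨i, hyi⟩ := Set.mem_iUnion.mp this
      have hyrange : f j t ∈ range (f i) :=
        closure_minimal Set.inter_subset_right (hrangeclosed i) hyi
      by_cases hiS' : i ∈ S.erase j
      · exact Set.mem_biUnion hiS' hyrange
      · exfalso
        rw [Finset.mem_erase] at hiS'
        push_neg at hiS'
        by_cases hij : i = j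
        · -- i = j : points of K \ Q on arc j stay outside [α, β]
          subst hij
          have hGsub : (K \ Q) ∩ range (f i) ⊆
              f i '' ({s : unitInterval | s.1 ≤ α} ∪ {s : unitInterval | β ≤ s.1}) := by
            rintro z ⟨hzKQ, s, rfl⟩
            refine ⟨s, ?_, rfl⟩
            by_contra hs
            rw [Set.mem_union, Set.mem_setOf_eq, Set.mem_setOf_eq] at hs
            push_neg at hs
            have : f i s ∈ P := hIccP s ⟨hs.1.le, hs.2.le⟩
            exact hzKQ.2 (hPQ this)
          have hGclosed : IsClosed (f i ''
              ({s : unitInterval | s.1 ≤ α} ∪ {s : unitInterval | β ≤ s.1})) := by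
            refine (IsCompact.image ?_ (hfc i)).isClosed
            refine IsClosed.isCompact (IsClosed.union ?_ ?_)
            · exact isClosed_le continuous_subtype_val continuous_const
            · exact isClosed_le continuous_const continuous_subtype_val
          have := closure_minimal hGsub hGclosed hyi
          obtain ⟨s₀, hs₀, hs₀eq⟩ := this
          have hseq : s₀ = t := hfi i hs₀eq
          subst hseq
          rcases hs₀ with h | h
          · have : α' ≤ s₀.1 := ht.1
            simp only [Set.mem_setOf_eq] at h
            linarith
          · have : s₀.1 ≤ β' := ht.2
            simp only [Set.mem_setOf_eq] at h
            linarith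
        · -- i ∉ S : use the hout hypothesis
          have hiS : i ∉ S := hiS' hij
          obtain ⟨t', ht'⟩ := hyrange
          obtain ⟨ζ', hζ'pos, hζ'⟩ := hout i hiS t' (by rw [ht']; exact hY'Y ⟨t, ht, rfl⟩)
          have hGsub : (K \ Q) ∩ range (f i) ⊆
              f i '' {s : unitInterval | ζ' ≤ |s.1 - t'.1|} := by
            rintro z ⟨hzKQ, s, rfl⟩
            refine ⟨s, ?_, rfl⟩
            by_contra hs
            rw [Set.mem_setOf_eq] at hs
            push_neg at hs
            exact hzKQ.2 (hζ' s hs.le)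
          have hGclosed : IsClosed (f i '' {s : unitInterval | ζ' ≤ |s.1 - t'.1|}) := by
            refine (IsCompact.image ?_ (hfc i)).isClosed
            refine IsClosed.isCompact ?_
            exact isClosed_le continuous_const
              ((continuous_subtype_val.sub continuous_const).abs)
          have := closure_minimal hGsub hGclosed hyi
          obtain ⟨s₀, hs₀, hs₀eq⟩ := this
          have : s₀ = t' := hfi i (by rw [hs₀eq, ht'])
          subst this
          simp only [Set.mem_setOf_eq, sub_self, abs_zero] at hs₀
          linarith
    -- the outside condition for the smaller index set
    have hout' : ∀ i ∉ S.erase j, ∀ t : unitInterval, f i t ∈ Y' →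
        ∃ ζ₀ > 0, ∀ s : unitInterval, |s.1 - t.1| ≤ ζ₀ → f i s ∈ Q := by
      intro i hiS' t htY'
      by_cases hij : i = j
      · subst hij
        obtain ⟨t₀, ht₀, ht₀eq⟩ := htY'
        have : t₀ = t := hfi i ht₀eq
        subst this
        refine ⟨ζ, hζpos, fun s hs => ?_⟩
        refine hPQ (hIccP s ⟨?_, ?_⟩)
        · have := abs_le.mp hs
          have h1 : α' ≤ t₀.1 := ht₀.1
          rw [hα'def] at h1
          linarith [this.2]
        · have := abs_le.mp hs
          have h2 : t₀.1 ≤ β' := ht₀.2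
          rw [hβ'def] at h2
          linarith [this.1]
      · have hiS : i ∉ S := by
          intro h
          exact hiS' (Finset.mem_erase.mpr ⟨hij, h⟩)
        exact hout i hiS t (hY'Y htY')
    -- apply the induction hypothesis
    have hcard' : (S.erase j).card ≤ N := by
      rw [Finset.card_erase_of_mem hjS]
      omega
    exact ih (S.erase j) hcard' Y' hY'Q hY'c hY'pre hY'nt hY'cl hY'S hout'
lemma main_claim {C : Set X} (hCcpt : IsCompact C) (hCconn : IsPreconnected C)
    {n : ℕ} (f : Fin n → unitInterval → X)
    (hfc : ∀ i, Continuous (f i)) (hfi : ∀ i, Function.Injective (f i))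
    (hsub : C ⊆ ⋃ i, range (f i)) {x : X} (hx : x ∈ C) {ε : ℝ} (hε : 0 < ε) :
    ∃ δ > 0, C ∩ ball x δ ⊆ connectedComponentIn (C ∩ closedBall x ε) x := by
  set K : Set X := C ∩ closedBall x ε with hKdef
  have hxK : x ∈ K := ⟨hx, mem_closedBall_self hε.le⟩
  set Q : Set X := connectedComponentIn K x with hQdef
  have hQK : Q ⊆ K := connectedComponentIn_subset K x
  by_cases hCB : C ⊆ closedBall x ε
  · have hKC : K = C := by
      rw [hKdef]
      exact Set.inter_eq_self_of_subset_left hCB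
    have hQC : C ⊆ Q := by
      rw [hQdef]
      exact hCconn.subset_connectedComponentIn hx (by rw [hKC])
    exact ⟨1, one_pos, fun z hz => hQC hz.1⟩
  · rw [Set.not_subset] at hCB
    obtain ⟨c, hcC, hcB⟩ := hCB
    by_contra hcon
    push_neg at hcon
    have hy : ∀ m : ℕ, ∃ z, (z ∈ C ∩ ball x (min ε (1 / (m + 1)))) ∧ z ∉ Q := by
      intro m
      have hpos : 0 < min ε (1 / (m + 1 : ℝ)) := lt_min hε (by positivity)
      obtain ⟨z, hz1, hz2⟩ := Set.not_subset.mp (hcon _ hpos)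
      exact ⟨z, hz1, hz2⟩
    choose y hymem hyQ using hy
    have hyK : ∀ m, y m ∈ K := by
      intro m
      refine ⟨(hymem m).1, ?_⟩
      have := mem_ball.mp (hymem m).2
      exact mem_closedBall.mpr (le_trans this.le (min_le_left _ _))
    have hyx : Tendsto y atTop (𝓝 x) := by
      rw [tendsto_iff_dist_tendsto_zero]
      refine squeeze_zero (fun m => dist_nonneg) (fun m => ?_)
        tendsto_one_div_add_atTop_nhds_zero_nat
      exact le_trans (mem_ball.mp (hymem m).2).le (min_le_right _ _)
    set Qm : ℕ → Set X := fun m => connectedComponentIn K (y m) with hQmdef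
    have hymem' : ∀ m, y m ∈ Qm m := fun m => mem_connectedComponentIn (hyK m)
    have hQmdisj : ∀ m, ∀ z, z ∈ Qm m → z ∉ Q := by
      intro m z hzQm hzQ
      have h1 : Qm m = connectedComponentIn K z := connectedComponentIn_eq hzQm
      have h2 : Q = connectedComponentIn K z := connectedComponentIn_eq hzQ
      have : y m ∈ Q := by rw [h2, ← h1]; exact hymem' m
      exact hyQ m this
    have hKclosed : IsClosed K := hCcpt.isClosed.inter Metric.isClosed_closedBall
    have hKcpt : IsCompact K := hCcpt.inter_right Metric.isClosed_closedBall
    have hne : (C \ K).Nonempty := ⟨c, hcC, fun hk => hcB hk.2⟩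
    have hz : ∀ m, ∃ z, z ∈ Qm m ∧ z ∈ closure (C \ K) := by
      intro m
      obtain ⟨z, hz1, hz2⟩ := bumping hCcpt hCconn hKclosed Set.inter_subset_left hne (hyK m)
      exact ⟨z, hz1, hz2⟩
    choose z hzQm hzcl using hz
    have hzdist : ∀ m, ε ≤ dist (z m) x := by
      intro m
      have hsub' : C \ K ⊆ {w | ε ≤ dist w x} := by
        intro w hw
        have : w ∉ closedBall x ε := fun hc => hw.2 ⟨hw.1, hc⟩
        rw [mem_closedBall] at this
        exact le_of_lt (lt_of_not_ge this)
      have hclosed' : IsClosed {w : X | ε ≤ dist w x} :=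
        isClosed_le continuous_const (continuous_id.dist continuous_const)
      exact closure_minimal hsub' hclosed' (hzcl m)
    have hzK : ∀ m, z m ∈ K := fun m => connectedComponentIn_subset _ _ (hzQm m)
    obtain ⟨zl, hzlK, φ, hφ, hφt⟩ := hKcpt.tendsto_subseq hzK
    have hyφx : Tendsto (fun k => y (φ k)) atTop (𝓝 x) := hyx.comp hφ.tendsto_atTop
    set L : Set X := ⋂ N : ℕ, closure (⋃ m ∈ Ici N, Qm (φ m)) with hLdef
    have hLpre : IsPreconnected L :=
      limsup_preconnected hKcpt (fun k => Qm (φ k))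
        (fun k => connectedComponentIn_subset _ _) (fun k => isPreconnected_connectedComponentIn)
        (fun k => y (φ k)) (fun k => hymem' (φ k)) hyφx
    have hxL : x ∈ L :=
      limsup_mem (fun k => Qm (φ k)) (ψ := fun k => k) (fun k => le_refl k)
        (fun k => hymem' (φ k)) hyφx
    have hzlL : zl ∈ L :=
      limsup_mem (fun k => Qm (φ k)) (ψ := fun k => k) (fun k => le_refl k)
        (fun k => hzQm (φ k)) hφt
    have hLclosed : IsClosed L := isClosed_iInter (fun N => isClosed_closure)
    have hLK : L ⊆ K := by
      intro w hw
      rw [hLdef, Set.mem_iInter] at hw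
      have h0 := hw 0
      have hsub' : closure (⋃ m ∈ Ici 0, Qm (φ m)) ⊆ K := by
        rw [← hKclosed.closure_eq]
        exact closure_mono (Set.iUnion₂_subset fun m _ => connectedComponentIn_subset _ _)
      exact hsub' h0
    have hLQ : L ⊆ Q := hLpre.subset_connectedComponentIn hxL hLK
    have hLc : IsCompact L := hKcpt.of_isClosed_subset hLclosed hLK
    have hLcl : ∀ p ∈ L, p ∈ closure (K \ Q) := by
      intro p hp
      rw [hLdef, Set.mem_iInter] at hp
      refine closure_mono ?_ (hp 0)
      refine Set.iUnion₂_subset fun m _ => ?_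
      intro w hw
      exact ⟨connectedComponentIn_subset _ _ hw, hQmdisj (φ m) w hw⟩
    have hzlne : zl ≠ x := by
      have hεle : ε ≤ dist zl x := by
        have hcl : IsClosed {w : X | ε ≤ dist w x} :=
          isClosed_le continuous_const (continuous_id.dist continuous_const)
        exact hcl.mem_of_tendsto hφt (Eventually.of_forall (fun k => hzdist (φ k)))
      intro h
      rw [h, dist_self] at hεle
      linarith
    have hLnt : L.Nontrivial := ⟨zl, hzlL, x, hxL, hzlne⟩
    exact descent f hfc hfi K Q (fun w hw => hsub hw.1) Finset.univ.card Finset.univ le_rfl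
      L hLQ hLc hLpre hLnt hLcl
      (fun w hw => by
        obtain ⟨i, hi⟩ := Set.mem_iUnion.mp (hsub (hLK hw).1)
        exact Set.mem_biUnion (Finset.mem_univ i) hi)
      (fun j hj => absurd (Finset.mem_univ j) hj)

/-- An arc in the plane: a subset homeomorphic to the closed unit interval, i.e. the image
of an injective continuous map from `[0,1]` into the plane. -/
def IsArc (A : Set (EuclideanSpace ℝ (Fin 2))) : Prop :=
  ∃ f : unitInterval → EuclideanSpace ℝ (Fin 2),
    Continuous f ∧ Function.Injective f ∧ Set.range f = A

/-- Every continuum in the plane contained in the union of finitely many arcs is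
locally connected. -/
theorem continuum_in_finitely_many_arcs_locallyConnected
    (C : Set (EuclideanSpace ℝ (Fin 2)))
    (hCcpt : IsCompact C) (hCconn : IsConnected C)
    (n : ℕ) (A : Fin n → Set (EuclideanSpace ℝ (Fin 2)))
    (hA : ∀ i, IsArc (A i)) (hsub : C ⊆ ⋃ i, A i) :
    LocallyConnectedSpace C := by
  choose f hfc hfi hfr using hA
  have hsub' : C ⊆ ⋃ i, range (f i) := by
    intro z hz
    obtain ⟨i, hi⟩ := Set.mem_iUnion.mp (hsub hz)
    exact Set.mem_iUnion.mpr ⟨i, by rw [hfr i]; exact hi⟩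
  rw [locallyConnectedSpace_iff_connected_subsets]
  intro x U hU
  rw [mem_nhds_subtype] at hU
  obtain ⟨u, hu, hsubU⟩ := hU
  rw [Metric.mem_nhds_iff] at hu
  obtain ⟨ε₂, hε₂, hballu⟩ := hu
  obtain ⟨δ, hδ, hQnbhd⟩ := main_claim hCcpt hCconn.isPreconnected f hfc hfi hsub'
    x.2 (half_pos hε₂)
  set Q : Set (EuclideanSpace ℝ (Fin 2)) :=
    connectedComponentIn (C ∩ closedBall x.1 (ε₂ / 2)) x.1 with hQdef
  have hQK : Q ⊆ C ∩ closedBall x.1 (ε₂ / 2) := connectedComponentIn_subset _ _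
  refine ⟨Subtype.val ⁻¹' Q, ?_, ?_, ?_⟩
  · rw [mem_nhds_subtype]
    refine ⟨ball x.1 δ, Metric.ball_mem_nhds _ hδ, ?_⟩
    intro q hq
    exact hQnbhd ⟨q.2, hq⟩
  · have hval : Subtype.val '' (Subtype.val ⁻¹' Q : Set C) = Q := by
      rw [Subtype.image_preimage_coe]
      exact Set.inter_eq_self_of_subset_right (hQK.trans Set.inter_subset_left)
    have := (IsInducing.subtypeVal : IsInducing ((↑) : C → EuclideanSpace ℝ (Fin 2))).isPreconnected_image
      (s := (Subtype.val ⁻¹' Q : Set C))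
    rw [hval] at this
    exact this.mp isPreconnected_connectedComponentIn
  · intro q hq
    apply hsubU
    have : q.1 ∈ closedBall x.1 (ε₂ / 2) := (hQK hq).2
    have : q.1 ∈ ball x.1 ε₂ := lt_of_le_of_lt (mem_closedBall.mp this) (by linarith)
    exact hballu this
end
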